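/- Let F : ℝ → ℝ be the Cantor function extended by F(y) = y outside [0,1] (i.e. F is continuous, nondecreasing, constant on each complementary interval of the ternary Cantor set K, with F(0)=0, F(1)=1). Then F is differentiable with derivative 0 at every point of [0,1] \ K, and F is not differentiable at any point of K. -/

import Mathlib

open MeasureTheory

/-- The ternary Cantor set: reals of the form `∑ 2 aₙ / 3^(n+1)` with digits `aₙ ∈ {0,1}`. -/
noncomputable def cantorTernarySet : Set ℝ :=
  Set.range fun a : ℕ → Bool => ∑' n : ℕ, (if a n then (2 : ℝ) else 0) / 3 ^ (n + 1)

/-- The Cantor (Cantor–Lebesgue) function on `[0,1]`, defined as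
`y ↦ 𝓗^s([0,y] ∩ K)` with `s = log 2 / log 3`, extended by the identity outside `[0,1]`. -/
noncomputable def cantorFun (y : ℝ) : ℝ :=
  if y ∈ Set.Icc (0 : ℝ) 1 then
    (MeasureTheory.Measure.hausdorffMeasure (Real.log 2 / Real.log 3)
      (cantorTernarySet ∩ Set.Icc 0 y)).toReal
  else y

open MeasureTheory Set

namespace CantorAux

noncomputable def dterm (q : ℝ) (a : ℕ → Bool) (n : ℕ) : ℝ :=
  (if a n then q - 1 else 0) / q ^ (n + 1)

noncomputable def dsum (q : ℝ) (a : ℕ → Bool) : ℝ := ∑' n, dterm q a n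

noncomputable def dpart (q : ℝ) (a : ℕ → Bool) (n : ℕ) : ℝ :=
  ∑ k ∈ Finset.range n, dterm q a k

variable {q : ℝ}

lemma dterm_nonneg (hq : 1 < q) (a : ℕ → Bool) (n : ℕ) : 0 ≤ dterm q a n := by
  have h1 : (0:ℝ) < q ^ (n+1) := pow_pos (lt_trans one_pos hq) _
  have h2 : (0:ℝ) ≤ (if a n then q - 1 else 0) := by split <;> linarith
  exact div_nonneg h2 h1.le

lemma dterm_le (hq : 1 < q) (a : ℕ → Bool) (n : ℕ) :
    dterm q a n ≤ (q - 1) / q ^ (n + 1) := by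
  have h1 : (0:ℝ) < q ^ (n+1) := pow_pos (lt_trans one_pos hq) _
  have h2 : (if a n then q - 1 else 0) ≤ q - 1 := by split <;> linarith
  have := mul_le_mul_of_nonneg_right h2 (inv_nonneg.mpr h1.le)
  simpa [dterm, div_eq_mul_inv, ite_mul] using this

lemma bound_eq (hq : 1 < q) (n : ℕ) :
    (q - 1) / q ^ (n + 1) = ((q - 1) * q⁻¹) * q⁻¹ ^ n := by
  rw [div_eq_mul_inv, pow_succ, mul_inv, inv_pow]
  ring

lemma summable_bound (hq : 1 < q) : Summable fun n : ℕ => (q - 1) / q ^ (n + 1) := by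
  have h0 : (0:ℝ) < q := lt_trans one_pos hq
  have : Summable fun n : ℕ => q⁻¹ ^ n :=
    summable_geometric_of_lt_one (by positivity) (inv_lt_one_of_one_lt₀ hq)
  simpa [bound_eq hq] using this.mul_left ((q - 1) * q⁻¹)

lemma tsum_bound (hq : 1 < q) : ∑' n : ℕ, (q - 1) / q ^ (n + 1) = 1 := by
  have h0 : (0:ℝ) < q := lt_trans one_pos hq
  have hlt : q⁻¹ < 1 := inv_lt_one_of_one_lt₀ hq
  have : ∑' n : ℕ, ((q - 1) * q⁻¹) * q⁻¹ ^ n = ((q - 1) * q⁻¹) * (1 - q⁻¹)⁻¹ := by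
    rw [tsum_mul_left, tsum_geometric_of_lt_one (by positivity) hlt]
  simp only [bound_eq hq]
  rw [this]
  have h1 : (1:ℝ) - q⁻¹ = (q - 1) / q := by field_simp
  rw [h1]
  rw [inv_div]
  field_simp
  exact div_self (sub_ne_zero.mpr (ne_of_gt hq))

lemma summable_dterm (hq : 1 < q) (a : ℕ → Bool) : Summable (dterm q a) :=
  Summable.of_nonneg_of_le (dterm_nonneg hq a) (dterm_le hq a) (summable_bound hq)

lemma dsum_nonneg (hq : 1 < q) (a : ℕ → Bool) : 0 ≤ dsum q a :=
  tsum_nonneg (dterm_nonneg hq a)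

lemma dsum_le_one (hq : 1 < q) (a : ℕ → Bool) : dsum q a ≤ 1 := by
  have := Summable.tsum_le_tsum (dterm_le hq a) (summable_dterm hq a) (summable_bound hq)
  rw [tsum_bound hq] at this
  exact this

lemma dsum_shift (hq : 1 < q) (a : ℕ → Bool) (n : ℕ) :
    dsum q a = dpart q a n + q⁻¹ ^ n * dsum q (fun k => a (n + k)) := by
  have h0 : (0:ℝ) < q := lt_trans one_pos hq
  have hsm := summable_dterm hq a
  have h1 : dsum q a = dpart q a n + ∑' k, dterm q a (k + n) :=
    (Summable.sum_add_tsum_nat_add n hsm).symm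
  rw [h1]
  congr 1
  have h2 : ∀ k : ℕ, dterm q a (k + n) = q⁻¹ ^ n * dterm q (fun j => a (n + j)) k := by
    intro k
    unfold dterm
    rw [Nat.add_comm k n]
    have e : n + k + 1 = n + (k + 1) := by ring
    rw [e, pow_add, div_eq_mul_inv, div_eq_mul_inv, mul_inv, inv_pow]
    ring
  simp only [h2]
  exact tsum_mul_left

lemma dsum_mem (hq : 1 < q) (a : ℕ → Bool) (n : ℕ) :
    dsum q a ∈ Icc (dpart q a n) (dpart q a n + q⁻¹ ^ n) := by
  have h0 : (0:ℝ) < q := lt_trans one_pos hq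
  have hp : (0:ℝ) ≤ q⁻¹ ^ n := by positivity
  have h1 := dsum_nonneg hq (fun k => a (n + k))
  have h2 := dsum_le_one hq (fun k => a (n + k))
  constructor
  · nlinarith [dsum_shift hq a n]
  · nlinarith [dsum_shift hq a n]

lemma dpart_congr (a b : ℕ → Bool) (n : ℕ) (h : ∀ k < n, a k = b k) :
    dpart q a n = dpart q b n := by
  unfold dpart
  apply Finset.sum_congr rfl
  intro k hk
  unfold dterm
  rw [h k (Finset.mem_range.mp hk)]

lemma abs_dsum_sub_le (hq : 1 < q) (a b : ℕ → Bool) (n : ℕ) (h : ∀ k < n, a k = b k) :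
    |dsum q a - dsum q b| ≤ q⁻¹ ^ n := by
  have h1 := dsum_mem hq a n
  have h2 := dsum_mem hq b n
  have h3 := dpart_congr (q := q) a b n h
  rw [abs_le]
  constructor
  · nlinarith [h1.1, h1.2, h2.1, h2.2]
  · nlinarith [h1.1, h1.2, h2.1, h2.2]

/-- digit-0 lower bound -/
lemma dsum_ge_digit0 (hq : 1 < q) (a : ℕ → Bool) (h : a 0 = true) :
    (q - 1) / q ≤ dsum q a := by
  have h0 : (0:ℝ) < q := lt_trans one_pos hq
  have h1 := (dsum_mem hq a 1).1
  have : dpart q a 1 = (q - 1) / q := by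
    unfold dpart dterm
    simp [h]
  linarith [this ▸ h1]

lemma dsum_le_digit0 (hq : 1 < q) (a : ℕ → Bool) (h : a 0 = false) :
    dsum q a ≤ q⁻¹ := by
  have h0 : (0:ℝ) < q := lt_trans one_pos hq
  have h1 := (dsum_mem hq a 1).2
  have : dpart q a 1 = 0 := by
    unfold dpart dterm
    simp [h]
  rw [this] at h1
  simpa using h1

/-- separation at the first differing digit -/
lemma dsum_sep (hq : 2 < q) (a b : ℕ → Bool) (n : ℕ) (h : ∀ k < n, a k = b k)
    (ha : a n = true) (hb : b n = false) :
    q⁻¹ ^ n * ((q - 2) / q) ≤ dsum q a - dsum q b := by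
  have hq1 : (1:ℝ) < q := by linarith
  have h0 : (0:ℝ) < q := by linarith
  have hp : (0:ℝ) < q⁻¹ ^ n := by positivity
  have h3 := dpart_congr (q := q) a b n h
  have hga : (q - 1) / q ≤ dsum q (fun k => a (n + k)) :=
    dsum_ge_digit0 hq1 _ (by simpa using ha)
  have hgb : dsum q (fun k => b (n + k)) ≤ q⁻¹ :=
    dsum_le_digit0 hq1 _ (by simpa using hb)
  have e1 := dsum_shift hq1 a n
  have e2 := dsum_shift hq1 b n
  have key : (q - 2) / q ≤ dsum q (fun k => a (n + k)) - dsum q (fun k => b (n + k)) := by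
    have : q⁻¹ = 1 / q := by field_simp
    rw [this] at hgb
    have : (q - 1) / q - 1 / q = (q - 2) / q := by ring
    linarith
  nlinarith [key]


lemma dsum_inj (hq : 2 < q) : Function.Injective (dsum q) := by
  classical
  intro a b hab
  by_contra hne
  have hex : ∃ n, a n ≠ b n := by
    by_contra h; push_neg at h; exact hne (funext h)
  set n := Nat.find hex with hn_def
  have hn : a n ≠ b n := Nat.find_spec hex
  have hlt : ∀ k < n, a k = b k := fun k hk => not_not.mp (Nat.find_min hex hk)
  have h0 : (0:ℝ) < q := by linarith
  have hp : (0:ℝ) < q⁻¹ ^ n * ((q - 2) / q) :=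
    mul_pos (pow_pos (by positivity) n) (div_pos (by linarith) h0)
  cases ha : a n <;> cases hb : b n
  · exact hn (ha.trans hb.symm)
  · have := dsum_sep hq b a n (fun k hk => (hlt k hk).symm) hb ha
    rw [hab] at this; linarith
  · have := dsum_sep hq a b n hlt ha hb
    rw [hab] at this; linarith
  · exact hn (ha.trans hb.symm)

/-! ### Binary expansion: surjectivity of `dsum 2` onto `[0,1]` -/

noncomputable def rseq (t : ℝ) : ℕ → ℝ
  | 0 => t
  | n + 1 => 2 * rseq t n - (if (1:ℝ)/2 ≤ rseq t n then 1 else 0)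

noncomputable def bdig (t : ℝ) (n : ℕ) : Bool := if (1:ℝ)/2 ≤ rseq t n then true else false

lemma rseq_mem {t : ℝ} (ht : t ∈ Icc (0:ℝ) 1) (n : ℕ) : rseq t n ∈ Icc (0:ℝ) 1 := by
  induction n with
  | zero => exact ht
  | succ n ih =>
    simp only [rseq]
    rcases ih with ⟨h1, h2⟩
    split <;> constructor <;> simp_all <;> linarith

lemma rseq_key {t : ℝ} (n : ℕ) :
    t = dpart 2 (bdig t) n + (2:ℝ)⁻¹ ^ n * rseq t n := by
  induction n with
  | zero => simp [dpart, rseq]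
  | succ n ih =>
    have hd : dpart 2 (bdig t) (n+1)
        = dpart 2 (bdig t) n + (if bdig t n then (1:ℝ) else 0) * 2⁻¹ ^ (n+1) := by
      unfold dpart dterm
      rw [Finset.sum_range_succ, div_eq_mul_inv, ← inv_pow]
      norm_num
    have hr : rseq t (n+1) = 2 * rseq t n - (if bdig t n then (1:ℝ) else 0) := by
      simp only [rseq, bdig]
      split <;> norm_num
    rw [hd, hr]
    linear_combination ih

lemma dsum_two_surj {t : ℝ} (ht : t ∈ Icc (0:ℝ) 1) : dsum 2 (bdig t) = t := by
  have hq : (1:ℝ) < 2 := one_lt_two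
  have hsm := summable_dterm hq (bdig t)
  have hlim : Filter.Tendsto (fun n => dpart 2 (bdig t) n) Filter.atTop (nhds (dsum 2 (bdig t))) :=
    hsm.hasSum.tendsto_sum_nat
  have hlim2 : Filter.Tendsto (fun n => dpart 2 (bdig t) n) Filter.atTop (nhds t) := by
    have h1 : ∀ n, |dpart 2 (bdig t) n - t| ≤ (2:ℝ)⁻¹ ^ n := by
      intro n
      have := rseq_key (t := t) n
      have hm := rseq_mem ht n
      have hp : (0:ℝ) ≤ (2:ℝ)⁻¹ ^ n := by positivity
      rw [abs_le]
      constructor <;> nlinarith [hm.1, hm.2]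
    have h2 : Filter.Tendsto (fun n : ℕ => (2:ℝ)⁻¹ ^ n) Filter.atTop (nhds 0) := by
      apply tendsto_pow_atTop_nhds_zero_of_lt_one <;> norm_num
    have h3 : Filter.Tendsto (fun n => dpart 2 (bdig t) n - t) Filter.atTop (nhds 0) :=
      squeeze_zero_norm (fun n => by simpa [Real.norm_eq_abs] using h1 n) h2
    have h4 := h3.add_const t
    simpa using h4
  exact tendsto_nhds_unique hlim hlim2


lemma dpart_nonneg (hq : 1 < q) (a : ℕ → Bool) (n : ℕ) : 0 ≤ dpart q a n :=
  Finset.sum_nonneg fun k _ => dterm_nonneg hq a k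

lemma dsum_const_true (hq : 1 < q) : dsum q (fun _ => true) = 1 := by
  have : ∀ n : ℕ, dterm q (fun _ => true) n = (q - 1) / q ^ (n + 1) := by
    intro n; simp [dterm]
  unfold dsum
  rw [tsum_congr this, tsum_bound hq]

end CantorAux

open MeasureTheory

namespace CantorAux

open scoped ENNReal NNReal

noncomputable def cs : ℝ := Real.log 2 / Real.log 3

lemma cs_pos : 0 < cs := div_pos (Real.log_pos one_lt_two) (Real.log_pos (by norm_num))

lemma rpow_third : ((3:ℝ)⁻¹) ^ cs = 2⁻¹ := by
  have h3 : (0:ℝ) < 3 := by norm_num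
  have h1 : (3:ℝ) ^ cs = 2 := by
    rw [Real.rpow_def_of_pos h3, cs]
    have hl3 : Real.log 3 ≠ 0 := ne_of_gt (Real.log_pos (by norm_num))
    have : Real.log 3 * (Real.log 2 / Real.log 3) = Real.log 2 := by field_simp
    rw [this, Real.exp_log two_pos]
  rw [Real.inv_rpow h3.le, h1]

lemma rpow_pow (m : ℕ) : (((3:ℝ)⁻¹) ^ m) ^ cs = ((2:ℝ)⁻¹) ^ m := by
  have h0 : (0:ℝ) ≤ 3⁻¹ := by norm_num
  rw [← Real.rpow_natCast ((3:ℝ)⁻¹) m, ← Real.rpow_mul h0, mul_comm,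
    Real.rpow_mul h0, rpow_third, Real.rpow_natCast]

lemma ofReal_pow_rpow (m : ℕ) :
    (ENNReal.ofReal (((3:ℝ)⁻¹) ^ m)) ^ cs = ENNReal.ofReal (((2:ℝ)⁻¹) ^ m) := by
  rw [ENNReal.ofReal_rpow_of_pos (by positivity), rpow_pow]

lemma h13 : (1:ℝ) < 3 := by norm_num
lemma h23 : (2:ℝ) < 3 := by norm_num
lemma h12 : (1:ℝ) < 2 := one_lt_two

lemma K_eq : cantorTernarySet = Set.range (dsum 3) := by
  unfold cantorTernarySet dsum dterm
  congr 1
  funext a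
  congr 1
  funext n
  norm_num

lemma continuous_dsum (hq : 1 < q) : Continuous (dsum q) := by
  apply continuous_tsum (u := fun n => (q - 1)/q^(n+1))
  · intro n
    apply Continuous.div_const
    have : Continuous fun a : ℕ → Bool => a n := continuous_apply n
    exact (continuous_of_discreteTopology (α := Bool)
      (f := fun b : Bool => if b then q - 1 else 0)).comp this
  · exact summable_bound hq
  · intro n a
    rw [Real.norm_eq_abs, abs_of_nonneg (dterm_nonneg hq a n)]
    exact dterm_le hq a n

lemma K_compact : IsCompact cantorTernarySet := by
  rw [K_eq, ← Set.image_univ]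
  exact CompactSpace.isCompact_univ.image (continuous_dsum h13)

lemma K_closed : IsClosed cantorTernarySet := K_compact.isClosed

lemma K_meas : MeasurableSet cantorTernarySet := K_closed.measurableSet

lemma zero_mem_K : (0:ℝ) ∈ cantorTernarySet := by
  rw [K_eq]
  refine ⟨fun _ => false, ?_⟩
  unfold dsum dterm
  simp

lemma one_mem_K : (1:ℝ) ∈ cantorTernarySet := by
  rw [K_eq]
  exact ⟨fun _ => true, dsum_const_true h13⟩

/-- Upper bound: `μH[s] K ≤ 1`. In particular the measure is finite. -/
lemma K_measure_le_one : μH[cs] cantorTernarySet ≤ 1 := by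
  classical
  have hcover := MeasureTheory.Measure.hausdorffMeasure_le_liminf_sum (X := ℝ) cs cantorTernarySet
    (l := Filter.atTop)
    (r := fun n : ℕ => ENNReal.ofReal (((3:ℝ)⁻¹) ^ n))
    (by
      rw [show (0:ℝ≥0∞) = ENNReal.ofReal 0 by simp]
      apply ENNReal.tendsto_ofReal
      apply tendsto_pow_atTop_nhds_zero_of_lt_one <;> norm_num)
    (fun n (w : Fin n → Bool) =>
      Set.Icc (dpart 3 (fun k => if h : k < n then w ⟨k, h⟩ else false) n)
        (dpart 3 (fun k => if h : k < n then w ⟨k, h⟩ else false) n + (3:ℝ)⁻¹ ^ n))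
    (by
      filter_upwards with n
      intro w
      rw [Real.ediam_Icc]
      simp)
    (by
      filter_upwards with n
      rw [K_eq]
      rintro x ⟨a, rfl⟩
      refine Set.mem_iUnion.mpr ⟨fun i => a i, ?_⟩
      have hc : dpart 3 (fun k => if h : k < n then a k else false) n = dpart 3 a n := by
        apply dpart_congr
        intro k hk
        simp [hk]
      rw [hc]
      exact dsum_mem h13 a n)
  refine le_trans hcover ?_
  have hval : ∀ n : ℕ, (∑ w : Fin n → Bool,
      Metric.ediam (Set.Icc (dpart 3 (fun k => if h : k < n then w ⟨k, h⟩ else false) n)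
        (dpart 3 (fun k => if h : k < n then w ⟨k, h⟩ else false) n + (3:ℝ)⁻¹ ^ n)) ^ cs)
      = 1 := by
    intro n
    have hterm : ∀ w : Fin n → Bool,
        Metric.ediam (Set.Icc (dpart 3 (fun k => if h : k < n then w ⟨k, h⟩ else false) n)
          (dpart 3 (fun k => if h : k < n then w ⟨k, h⟩ else false) n + (3:ℝ)⁻¹ ^ n)) ^ cs
        = ENNReal.ofReal (((2:ℝ)⁻¹) ^ n) := by
      intro w
      rw [Real.ediam_Icc]
      rw [show ∀ c : ℝ, c + (3:ℝ)⁻¹ ^ n - c = (3:ℝ)⁻¹ ^ n from fun c => by ring]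
      exact ofReal_pow_rpow n
    rw [Finset.sum_congr rfl (fun w _ => hterm w), Finset.sum_const]
    have hcard : (Finset.univ : Finset (Fin n → Bool)).card = 2 ^ n := by
      simp [Finset.card_univ]
    rw [hcard, nsmul_eq_mul]
    have hc2 : ((2 ^ n : ℕ) : ℝ≥0∞) = ENNReal.ofReal ((2:ℝ) ^ n) := by
      rw [ENNReal.ofReal_pow (by norm_num)]
      norm_num
    rw [hc2, ← ENNReal.ofReal_mul (by positivity)]
    rw [show (2:ℝ) ^ n * 2⁻¹ ^ n = 1 by rw [← mul_pow]; norm_num]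
    norm_num
  simp only [hval]
  simp [Filter.liminf_const]


noncomputable def gmap : ℝ → ℝ := fun x => dsum 2 (Function.invFun (dsum 3) x)

lemma gmap_dsum (a : ℕ → Bool) : gmap (dsum 3 a) = dsum 2 a := by
  unfold gmap
  rw [Function.leftInverse_invFun (dsum_inj h23) a]

noncomputable def csNN : ℝ≥0 := ⟨cs, cs_pos.le⟩

lemma csNN_coe : (csNN : ℝ) = cs := rfl

lemma holder_gmap : HolderOnWith 2 csNN gmap cantorTernarySet := by
  classical
  rw [K_eq]
  rintro x ⟨a, rfl⟩ y ⟨b, rfl⟩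
  rcases eq_or_ne a b with rfl | hne
  · simp
  have hex : ∃ n, a n ≠ b n := by
    by_contra h; push_neg at h; exact hne (funext h)
  set n := Nat.find hex with hn_def
  have hn : a n ≠ b n := Nat.find_spec hex
  have hlt : ∀ k < n, a k = b k := fun k hk => not_not.mp (Nat.find_min hex hk)
  -- upper bound on g-distance
  have hg : |dsum 2 a - dsum 2 b| ≤ (2:ℝ)⁻¹ ^ n := abs_dsum_sub_le h12 a b n hlt
  -- lower bound on x-distance
  have hx : (3:ℝ)⁻¹ ^ (n+1) ≤ |dsum 3 a - dsum 3 b| := by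
    have key : ∀ u v : ℕ → Bool, (∀ k < n, u k = v k) → u n = true → v n = false →
        (3:ℝ)⁻¹ ^ (n+1) ≤ |dsum 3 u - dsum 3 v| := by
      intro u v h1 h2 h3
      have := dsum_sep h23 u v n h1 h2 h3
      have he : (3:ℝ)⁻¹ ^ n * ((3 - 2)/3) = 3⁻¹ ^ (n+1) := by
        rw [pow_succ]; norm_num
      rw [he] at this
      have hp : (0:ℝ) < 3⁻¹ ^ (n+1) := by positivity
      rw [abs_sub_comm, abs_of_nonpos (by linarith)]
      linarith
    cases ha : a n <;> cases hb : b n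
    · exact absurd (ha.trans hb.symm) hn
    · rw [abs_sub_comm]; exact key b a (fun k hk => (hlt k hk).symm) hb ha
    · exact key a b hlt ha hb
    · exact absurd (ha.trans hb.symm) hn
  rw [gmap_dsum, gmap_dsum, edist_dist, edist_dist, Real.dist_eq, Real.dist_eq]
  calc ENNReal.ofReal |dsum 2 a - dsum 2 b| ≤ ENNReal.ofReal ((2:ℝ)⁻¹ ^ n) :=
        ENNReal.ofReal_le_ofReal hg
    _ = 2 * ENNReal.ofReal ((2:ℝ)⁻¹ ^ (n+1)) := by
        rw [show ((2:ℝ)⁻¹ ^ n) = 2 * 2⁻¹ ^ (n+1) by rw [pow_succ]; ring]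
        rw [ENNReal.ofReal_mul (by norm_num)]
        norm_num
    _ = 2 * (ENNReal.ofReal ((3:ℝ)⁻¹ ^ (n+1))) ^ cs := by rw [ofReal_pow_rpow]
    _ ≤ 2 * (ENNReal.ofReal |dsum 3 a - dsum 3 b|) ^ (csNN : ℝ) := by
        rw [csNN_coe]
        exact mul_le_mul_right
          (ENNReal.rpow_le_rpow (ENNReal.ofReal_le_ofReal hx) cs_pos.le) 2

/-- Mass distribution lower bound on level-`n` intervals. -/
lemma measure_ge (a : ℕ → Bool) (n : ℕ) :
    ENNReal.ofReal ((2:ℝ)⁻¹ ^ (n+1))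
      ≤ μH[cs] (cantorTernarySet ∩ Set.Icc (dpart 3 a n) (dpart 3 a n + (3:ℝ)⁻¹ ^ n)) := by
  classical
  set c := dpart 3 a n
  set A := cantorTernarySet ∩ Set.Icc c (c + (3:ℝ)⁻¹ ^ n) with hA
  set t := dpart 2 a n
  -- Step 1: the image of A under gmap contains an interval of length 2⁻¹ ^ n
  have himg : Set.Icc t (t + (2:ℝ)⁻¹ ^ n) ⊆ gmap '' A := by
    intro u hu
    have h2n : (0:ℝ) < 2 ^ n := by positivity
    set v := (u - t) * 2 ^ n with hv
    have hv01 : v ∈ Set.Icc (0:ℝ) 1 := by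
      constructor
      · apply mul_nonneg (by linarith [hu.1]) h2n.le
      · rw [hv]
        have h1 : u - t ≤ 2⁻¹ ^ n := by linarith [hu.2]
        calc (u - t) * 2 ^ n ≤ 2⁻¹ ^ n * 2 ^ n := by nlinarith
          _ = 1 := by rw [← mul_pow]; norm_num
    set b' := bdig v
    have hb' : dsum 2 b' = v := dsum_two_surj hv01
    set b : ℕ → Bool := fun k => if h : k < n then a k else b' (k - n) with hb
    have hagree : ∀ k < n, b k = a k := by intro k hk; simp [hb, hk]
    have hshift : (fun k => b (n + k)) = b' := by
      funext k
      simp only [hb]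
      rw [dif_neg (by omega)]
      congr 1
      omega
    refine ⟨dsum 3 b, ⟨?_, ?_⟩, ?_⟩
    · rw [K_eq]; exact ⟨b, rfl⟩
    · have := dsum_mem h13 b n
      rwa [dpart_congr b a n hagree] at this
    · rw [gmap_dsum, dsum_shift h12 b n, dpart_congr b a n hagree, hshift, hb']
      rw [hv]
      have hone : (2:ℝ)⁻¹ ^ n * 2 ^ n = 1 := by rw [← mul_pow]; norm_num
      have h1 : (2:ℝ)⁻¹ ^ n * ((u - t) * 2 ^ n) = u - t := by
        calc (2:ℝ)⁻¹ ^ n * ((u - t) * 2 ^ n) = (2⁻¹ ^ n * 2 ^ n) * (u - t) := by ring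
          _ = u - t := by rw [hone]; ring
      rw [h1]
      ring
  -- Step 2: Hölder estimate
  have hH : μH[(1:ℝ)] (gmap '' A) ≤ (2:ℝ≥0∞) ^ (1:ℝ) * μH[(csNN:ℝ) * 1] A :=
    (holder_gmap.mono Set.inter_subset_left).hausdorffMeasure_image_le
      (by rw [← NNReal.coe_pos, csNN_coe]; exact cs_pos) zero_le_one
  have hvol : ENNReal.ofReal ((2:ℝ)⁻¹ ^ n) ≤ μH[(1:ℝ)] (gmap '' A) := by
    rw [MeasureTheory.hausdorffMeasure_real]
    refine le_trans ?_ (measure_mono himg)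
    rw [Real.volume_Icc]
    simp
  rw [csNN_coe, mul_one, ENNReal.rpow_one] at hH
  have key : ENNReal.ofReal ((2:ℝ)⁻¹ ^ n) ≤ 2 * μH[cs] A := hvol.trans hH
  calc ENNReal.ofReal ((2:ℝ)⁻¹ ^ (n+1))
      = 2⁻¹ * ENNReal.ofReal ((2:ℝ)⁻¹ ^ n) := by
        rw [show ((2:ℝ)⁻¹ ^ (n+1)) = 2⁻¹ * 2⁻¹ ^ n from by rw [pow_succ]; ring]
        rw [ENNReal.ofReal_mul (by norm_num)]
        congr 1
        rw [ENNReal.ofReal_inv_of_pos two_pos]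
        norm_num
    _ ≤ 2⁻¹ * (2 * μH[cs] A) := by gcongr
    _ = μH[cs] A := by
        rw [← mul_assoc, ENNReal.inv_mul_cancel (by norm_num) (by norm_num), one_mul]


lemma cantorFun_eq {y : ℝ} (hy : y ∈ Set.Icc (0:ℝ) 1) :
    cantorFun y = (μH[cs] (cantorTernarySet ∩ Set.Icc 0 y)).toReal := by
  rw [cantorFun, if_pos hy]
  rfl

lemma measure_inter_ne_top (T : Set ℝ) : μH[cs] (cantorTernarySet ∩ T) ≠ ⊤ :=
  ne_top_of_le_ne_top (by norm_num)
    (le_trans (measure_mono Set.inter_subset_left) K_measure_le_one)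

/-- Increment estimate for the Cantor function. -/
lemma cantorFun_incr {u v : ℝ} (hu : 0 ≤ u) (huv : u ≤ v) (hv : v ≤ 1) :
    (μH[cs] (cantorTernarySet ∩ Set.Icc u v)).toReal ≤ cantorFun v - cantorFun u := by
  haveI : NoAtoms (μH[cs] : Measure ℝ) := MeasureTheory.Measure.noAtoms_hausdorff ℝ cs_pos
  have hsplit : cantorTernarySet ∩ Set.Icc 0 v
      = (cantorTernarySet ∩ Set.Icc 0 u) ∪ (cantorTernarySet ∩ Set.Ioc u v) := by
    rw [← Set.inter_union_distrib_left, Set.Icc_union_Ioc_eq_Icc hu huv]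
  have hdisj : Disjoint (cantorTernarySet ∩ Set.Icc 0 u) (cantorTernarySet ∩ Set.Ioc u v) := by
    apply Disjoint.mono Set.inter_subset_right Set.inter_subset_right
    rw [Set.disjoint_left]
    rintro x ⟨_, hx2⟩ ⟨hx3, _⟩
    exact absurd hx2 (not_le.mpr hx3)
  have hmeas : MeasurableSet (cantorTernarySet ∩ Set.Ioc u v) :=
    K_meas.inter measurableSet_Ioc
  have hadd : μH[cs] (cantorTernarySet ∩ Set.Icc 0 v)
      = μH[cs] (cantorTernarySet ∩ Set.Icc 0 u) + μH[cs] (cantorTernarySet ∩ Set.Ioc u v) := by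
    rw [hsplit, measure_union hdisj hmeas]
  have h1 : cantorFun v - cantorFun u = (μH[cs] (cantorTernarySet ∩ Set.Ioc u v)).toReal := by
    rw [cantorFun_eq ⟨hu, le_trans huv hv⟩, cantorFun_eq ⟨le_trans hu huv, hv⟩, hadd,
      ENNReal.toReal_add (measure_inter_ne_top _) (measure_inter_ne_top _)]
    ring
  rw [h1]
  apply ENNReal.toReal_mono (measure_inter_ne_top _)
  have hsub : cantorTernarySet ∩ Set.Icc u v
      ⊆ (cantorTernarySet ∩ Set.Ioc u v) ∪ {u} := by
    rintro x ⟨hxK, hx1, hx2⟩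
    rcases eq_or_lt_of_le hx1 with rfl | hlt
    · exact Or.inr rfl
    · exact Or.inl ⟨hxK, hlt, hx2⟩
  calc μH[cs] (cantorTernarySet ∩ Set.Icc u v)
      ≤ μH[cs] ((cantorTernarySet ∩ Set.Ioc u v) ∪ {u}) := measure_mono hsub
    _ ≤ μH[cs] (cantorTernarySet ∩ Set.Ioc u v) + μH[cs] {u} := measure_union_le _ _
    _ = μH[cs] (cantorTernarySet ∩ Set.Ioc u v) := by rw [@NullSingletonClass.measure_singleton _ _ _ this u, add_zero]

lemma K_subset_Icc : cantorTernarySet ⊆ Set.Icc (0:ℝ) 1 := by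
  rw [K_eq]
  rintro x ⟨a, rfl⟩
  exact ⟨dsum_nonneg h13 a, dsum_le_one h13 a⟩

end CantorAux

open CantorAux

theorem stmt10 :
    (∀ y ∈ Set.Icc (0 : ℝ) 1 \ cantorTernarySet, HasDerivAt cantorFun 0 y) ∧
      ∀ y ∈ cantorTernarySet, ¬ DifferentiableAt ℝ cantorFun y := by
  constructor
  · -- differentiable with derivative 0 off K
    rintro y ⟨hy01, hyK⟩
    -- y is in the open interval (0,1)
    have hy0 : 0 < y := lt_of_le_of_ne hy01.1 (fun h => hyK (h ▸ zero_mem_K))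
    have hy1 : y < 1 := lt_of_le_of_ne hy01.2 (fun h => hyK (h.symm ▸ one_mem_K))
    obtain ⟨ε, hε, hball⟩ := Metric.isOpen_iff.mp K_closed.isOpen_compl y hyK
    set δ := min ε (min y (1 - y)) with hδ
    have hδ0 : 0 < δ := by
      apply lt_min hε
      apply lt_min hy0
      linarith
    have hconst : ∀ x, dist x y < δ → cantorFun x = cantorFun y := by
      intro x hx
      have hd := abs_lt.mp (by rwa [Real.dist_eq] at hx)
      have hx01 : x ∈ Set.Icc (0:ℝ) 1 := by
        constructor
        · have : δ ≤ y := le_trans (min_le_right _ _) (min_le_left _ _)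
          linarith [hd.1]
        · have : δ ≤ 1 - y := le_trans (min_le_right _ _) (min_le_right _ _)
          linarith [hd.2]
      have hinter : cantorTernarySet ∩ Set.Icc 0 x = cantorTernarySet ∩ Set.Icc 0 y := by
        ext z
        simp only [Set.mem_inter_iff, Set.mem_Icc]
        have hz : z ∈ cantorTernarySet → (z ≤ x ↔ z ≤ y) := by
          intro hzK
          have hzball : z ∉ Metric.ball y ε := fun hb => (hball hb) hzK
          have hzd : ε ≤ |z - y| := by
            simpa [Real.dist_eq] using hzball
          have hδε : δ ≤ ε := min_le_left _ _
          rcases le_abs.mp hzd with h | h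
          · constructor <;> intro <;> linarith [hd.1, hd.2]
          · constructor <;> intro <;> linarith [hd.1, hd.2]
        constructor
        · rintro ⟨hzK, hz0, hzx⟩; exact ⟨hzK, hz0, (hz hzK).mp hzx⟩
        · rintro ⟨hzK, hz0, hzy⟩; exact ⟨hzK, hz0, (hz hzK).mpr hzy⟩
      rw [cantorFun_eq hx01, cantorFun_eq hy01, hinter]
    have heq : cantorFun =ᶠ[nhds y] fun _ => cantorFun y := by
      filter_upwards [Metric.ball_mem_nhds y hδ0] with x hx
      exact hconst x hx
    exact (hasDerivAt_const y (cantorFun y)).congr_of_eventuallyEq heq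
  · -- not differentiable on K
    rintro y hyK hdiff
    rw [K_eq] at hyK
    obtain ⟨a, rfl⟩ := hyK
    set y := dsum 3 a with hy
    set L := deriv cantorFun y with hL
    have hder : HasDerivAt cantorFun L y := hdiff.hasDerivAt
    have hlo := (hasDerivAt_iff_isLittleO.mp hder).def one_pos
    rw [Metric.eventually_nhds_iff] at hlo
    obtain ⟨δ, hδ0, hδ⟩ := hlo
    -- for every n, the increment over the level-n interval is at least 2⁻¹^(n+1)
    have hincr : ∀ n : ℕ, (2:ℝ)⁻¹ ^ (n+1)
        ≤ cantorFun (dpart 3 a n + 3⁻¹ ^ n) - cantorFun (dpart 3 a n) := by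
      intro n
      have hu0 : 0 ≤ dpart 3 a n := dpart_nonneg h13 a n
      have huv : dpart 3 a n ≤ dpart 3 a n + 3⁻¹ ^ n :=
        le_add_of_nonneg_right (by positivity)
      have hv1 : dpart 3 a n + 3⁻¹ ^ n ≤ 1 := by
        set b : ℕ → Bool := fun k => if k < n then a k else true with hb
        have h1 : dsum 3 b = dpart 3 a n + 3⁻¹ ^ n := by
          rw [dsum_shift h13 b n]
          congr 1
          · exact dpart_congr b a n (fun k hk => by simp [hb, hk])
          · have : (fun k => b (n + k)) = fun _ => true := by
              funext k; simp [hb]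
            rw [this, dsum_const_true h13, mul_one]
        rw [← h1]
        exact dsum_le_one h13 b
      have hmge := measure_ge a n
      have htr : (2:ℝ)⁻¹ ^ (n+1)
          ≤ (μH[cs] (cantorTernarySet ∩ Set.Icc (dpart 3 a n) (dpart 3 a n + 3⁻¹ ^ n))).toReal := by
        have := ENNReal.toReal_mono (measure_inter_ne_top _) hmge
        rwa [ENNReal.toReal_ofReal (by positivity)] at this
      exact le_trans htr (cantorFun_incr hu0 huv hv1)
    -- choose n large
    have hyIcc : ∀ n : ℕ, y ∈ Set.Icc (dpart 3 a n) (dpart 3 a n + 3⁻¹ ^ n) :=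
      fun n => dsum_mem h13 a n
    obtain ⟨N, hN⟩ : ∃ N : ℕ, (3:ℝ)⁻¹ ^ N < δ := by
      obtain ⟨N, hN⟩ := pow_unbounded_of_one_lt δ⁻¹ (by norm_num : (1:ℝ) < 3)
      refine ⟨N, ?_⟩
      rw [inv_pow]
      exact inv_lt_of_inv_lt₀ hδ0 hN
    obtain ⟨M, hM⟩ := pow_unbounded_of_one_lt (2 * (2 + |L|)) (by norm_num : (1:ℝ) < 3/2)
    set n := N + M with hn
    have h3n : (3:ℝ)⁻¹ ^ n < δ := by
      have : (3:ℝ)⁻¹ ^ n ≤ 3⁻¹ ^ N :=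
        pow_le_pow_of_le_one (by norm_num) (by norm_num) (by omega)
      linarith
    have h32 : 2 * (2 + |L|) < (3/2:ℝ) ^ n := by
      have h1 : (3/2:ℝ) ^ M ≤ (3/2) ^ n :=
        pow_le_pow_right₀ (by norm_num) (by omega)
      linarith
    have h := hyIcc n
    have hp3' : (0:ℝ) < 3⁻¹ ^ n := by positivity
    have hyu : |dpart 3 a n - y| ≤ 3⁻¹ ^ n := by
      rw [abs_le]
      constructor
      · linarith [h.1, h.2, hp3']
      · linarith [h.1, h.2, hp3']
    have hyv : |dpart 3 a n + 3⁻¹ ^ n - y| ≤ 3⁻¹ ^ n := by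
      rw [abs_le]
      constructor
      · linarith [h.1, h.2, hp3']
      · linarith [h.1, h.2, hp3']
    have hbu := hδ (show dist (dpart 3 a n) y < δ by
      rw [Real.dist_eq]; exact lt_of_le_of_lt hyu h3n)
    have hbv := hδ (show dist (dpart 3 a n + 3⁻¹ ^ n) y < δ by
      rw [Real.dist_eq]; exact lt_of_le_of_lt hyv h3n)
    rw [Real.norm_eq_abs, Real.norm_eq_abs, one_mul, smul_eq_mul] at hbu hbv
    have e1 := abs_le.mp hbu
    have e2 := abs_le.mp hbv
    have e4 : (dpart 3 a n + 3⁻¹ ^ n - y) * L - (dpart 3 a n - y) * L ≤ |L| * 3⁻¹ ^ n := by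
      have he : (dpart 3 a n + 3⁻¹ ^ n - y) * L - (dpart 3 a n - y) * L = L * 3⁻¹ ^ n := by
        ring
      rw [he]
      calc L * 3⁻¹ ^ n ≤ |L * 3⁻¹ ^ n| := le_abs_self _
        _ = |L| * 3⁻¹ ^ n := by
            rw [abs_mul, abs_of_nonneg (by positivity : (0:ℝ) ≤ 3⁻¹ ^ n)]
    have hFuv : cantorFun (dpart 3 a n + 3⁻¹ ^ n) - cantorFun (dpart 3 a n)
        ≤ (2 + |L|) * 3⁻¹ ^ n := by
      nlinarith [e1.1, e1.2, e2.1, e2.2, hyu, hyv, e4]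
    have hfinal := le_trans (hincr n) hFuv
    have hp3 : (0:ℝ) < 3⁻¹ ^ n := by positivity
    have hmp : ((3:ℝ)/2) ^ n * 3⁻¹ ^ n = 2⁻¹ ^ n := by rw [← mul_pow]; norm_num
    have hpow : (2:ℝ)⁻¹ ^ (n+1) = 2⁻¹ * ((3/2) ^ n * 3⁻¹ ^ n) := by
      rw [hmp, pow_succ]; ring
    nlinarith [hfinal, hpow, mul_lt_mul_of_pos_right h32 hp3]
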